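/- arXiv:0809.2623 — 5 statements merged into one kernel-verified Lean document; each statement's English description precedes it below -/
import Mathlib

section
/- For positive integers m, n with m + n ≥ 3, the radio number of the complete bipartite graph K_{m,n} equals m + n + 1, i.e., rn(K_{m,n}) = m + n + 1. -/
open SimpleGraph Sum

section Aux

variable {m n : ℕ}

private lemma cbg_adj_of_isLeft_ne {u v : Fin m ⊕ Fin n}
    (h : u.isLeft ≠ v.isLeft) :
    (completeBipartiteGraph (Fin m) (Fin n)).Adj u v := by
  cases u <;> cases v <;> simp_all

private lemma cbg_reachable (hm : 1 ≤ m) (hn : 1 ≤ n) (u v : Fin m ⊕ Fin n) :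
    (completeBipartiteGraph (Fin m) (Fin n)).Reachable u v := by
  set G := completeBipartiteGraph (Fin m) (Fin n) with hG
  have hl : ∀ i : Fin m, ∀ j : Fin n, G.Adj (inl i) (inr j) := by
    intro i j; simp [hG]
  have hr : ∀ j : Fin n, ∀ i : Fin m, G.Adj (inr j) (inl i) := by
    intro j i; simp [hG]
  cases u with
  | inl i =>
    cases v with
    | inl i' =>
      exact Walk.reachable (Walk.cons (hl i ⟨0, hn⟩) (Walk.cons (hr ⟨0, hn⟩ i') Walk.nil))
    | inr j => exact Walk.reachable (Walk.cons (hl i j) Walk.nil)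
  | inr j =>
    cases v with
    | inl i => exact Walk.reachable (Walk.cons (hr j i) Walk.nil)
    | inr j' =>
      exact Walk.reachable (Walk.cons (hr j ⟨0, hm⟩) (Walk.cons (hl ⟨0, hm⟩ j') Walk.nil))

private lemma cbg_edist_le_two (hm : 1 ≤ m) (hn : 1 ≤ n) (u v : Fin m ⊕ Fin n) :
    (completeBipartiteGraph (Fin m) (Fin n)).edist u v ≤ 2 := by
  set G := completeBipartiteGraph (Fin m) (Fin n) with hG
  have hl : ∀ i : Fin m, ∀ j : Fin n, G.Adj (inl i) (inr j) := by
    intro i j; simp [hG]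
  have hr : ∀ j : Fin n, ∀ i : Fin m, G.Adj (inr j) (inl i) := by
    intro j i; simp [hG]
  cases u with
  | inl i =>
    cases v with
    | inl i' =>
      calc G.edist (inl i) (inl i')
          ≤ (Walk.cons (hl i ⟨0, hn⟩) (Walk.cons (hr ⟨0, hn⟩ i') Walk.nil)).length :=
            SimpleGraph.edist_le _
        _ = 2 := by simp
    | inr j =>
      calc G.edist (inl i) (inr j) ≤ (Walk.cons (hl i j) Walk.nil).length :=
            SimpleGraph.edist_le _
        _ ≤ 2 := by simp
  | inr j =>
    cases v with
    | inl i =>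
      calc G.edist (inr j) (inl i) ≤ (Walk.cons (hr j i) Walk.nil).length :=
            SimpleGraph.edist_le _
        _ ≤ 2 := by simp
    | inr j' =>
      calc G.edist (inr j) (inr j')
          ≤ (Walk.cons (hr j ⟨0, hm⟩) (Walk.cons (hl ⟨0, hm⟩ j') Walk.nil)).length :=
            SimpleGraph.edist_le _
        _ = 2 := by simp

private lemma cbg_two_le_dist (hm : 1 ≤ m) (hn : 1 ≤ n) {u v : Fin m ⊕ Fin n}
    (hne : u ≠ v) (hadj : ¬ (completeBipartiteGraph (Fin m) (Fin n)).Adj u v) :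
    2 ≤ (completeBipartiteGraph (Fin m) (Fin n)).dist u v := by
  set G := completeBipartiteGraph (Fin m) (Fin n)
  have h0 : 0 < G.dist u v := (cbg_reachable hm hn u v).pos_dist_of_ne hne
  have h1 : G.dist u v ≠ 1 := fun h => hadj (SimpleGraph.dist_eq_one_iff_adj.mp h)
  omega

private lemma cbg_diam (hm : 1 ≤ m) (hn : 1 ≤ n) (hmn : 3 ≤ m + n) :
    (completeBipartiteGraph (Fin m) (Fin n)).diam = 2 := by
  set G := completeBipartiteGraph (Fin m) (Fin n) with hG
  have hediam : G.ediam = 2 := by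
    apply le_antisymm
    · exact SimpleGraph.ediam_le_of_edist_le (cbg_edist_le_two hm hn)
    · -- find two distinct vertices on the same side
      obtain ⟨u, v, hne, hnadj⟩ :
          ∃ u v : Fin m ⊕ Fin n, u ≠ v ∧ ¬ G.Adj u v := by
        rcases Nat.lt_or_ge m 2 with h | h
        · have h2 : 2 ≤ n := by omega
          refine ⟨inr ⟨0, by omega⟩, inr ⟨1, by omega⟩, by simp, by simp [hG]⟩
        · refine ⟨inl ⟨0, by omega⟩, inl ⟨1, by omega⟩, by simp, by simp [hG]⟩
      have h0 : G.edist u v ≠ 0 := by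
        simpa [SimpleGraph.edist_eq_zero_iff] using hne
      have h1 : G.edist u v ≠ 1 := fun h => hnadj (SimpleGraph.edist_eq_one_iff_adj.mp h)
      have hle : G.edist u v ≤ 2 := cbg_edist_le_two hm hn u v
      have h2 : (1 : ℕ∞) < G.edist u v :=
        lt_of_le_of_ne (ENat.one_le_iff_ne_zero.mpr h0) (Ne.symm h1)
      have h3 : (1 : ℕ∞) + 1 ≤ G.edist u v := Order.add_one_le_of_lt h2
      calc (2 : ℕ∞) = 1 + 1 := by norm_num
        _ ≤ G.edist u v := h3
        _ ≤ G.ediam := SimpleGraph.edist_le_ediam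
  simp [SimpleGraph.diam, hediam]

end Aux

/-- A radio labeling of a graph `G` is an injective assignment of positive
integers to the vertices such that `d(u,v) + |c(u) - c(v)| ≥ diam(G) + 1`
for all pairs of distinct vertices. -/
def IsRadioLabeling {V : Type*} [Fintype V] (G : SimpleGraph V) (c : V → ℕ) : Prop :=
  Function.Injective c ∧ (∀ v, 1 ≤ c v) ∧
    ∀ u v : V, u ≠ v →
      (G.diam : ℤ) + 1 ≤ (G.dist u v : ℤ) + |(c u : ℤ) - (c v : ℤ)|

/-- The radio number of `G`: the least possible span (maximum label used)
of a radio labeling of `G`. -/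
noncomputable def radioNumber {V : Type*} [Fintype V] (G : SimpleGraph V) : ℕ :=
  sInf {s : ℕ | ∃ c : V → ℕ, IsRadioLabeling G c ∧ s = Finset.univ.sup c}

section Main

variable {m n : ℕ}

private lemma cbg_lower (hm : 1 ≤ m) (hn : 1 ≤ n) (hmn : 3 ≤ m + n)
    (c : Fin m ⊕ Fin n → ℕ)
    (hc : IsRadioLabeling (completeBipartiteGraph (Fin m) (Fin n)) c) :
    m + n + 1 ≤ Finset.univ.sup c := by
  set G := completeBipartiteGraph (Fin m) (Fin n) with hG
  obtain ⟨hinj, hpos, hcond⟩ := hc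
  by_contra hlt
  push_neg at hlt
  have hsup : ∀ v, c v ≤ m + n := fun v =>
    le_trans (Finset.le_sup (Finset.mem_univ v)) (by omega)
  -- image of c is exactly Icc 1 (m+n)
  have hsub : Finset.univ.image c ⊆ Finset.Icc 1 (m + n) := by
    intro k hk
    obtain ⟨v, _, rfl⟩ := Finset.mem_image.mp hk
    exact Finset.mem_Icc.mpr ⟨hpos v, hsup v⟩
  have hcard : (Finset.Icc 1 (m + n)).card ≤ (Finset.univ.image c).card := by
    rw [Finset.card_image_of_injective _ hinj, Nat.card_Icc]
    simp
  have himg : Finset.univ.image c = Finset.Icc 1 (m + n) :=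
    Finset.eq_of_subset_of_card_le hsub hcard
  have hsurj : ∀ k, 1 ≤ k → k ≤ m + n → ∃ v, c v = k := by
    intro k h1 h2
    have : k ∈ Finset.univ.image c := himg ▸ Finset.mem_Icc.mpr ⟨h1, h2⟩
    obtain ⟨v, _, hv⟩ := Finset.mem_image.mp this
    exact ⟨v, hv⟩
  -- consecutive labels lie on the same side
  have hdiam : G.diam = 2 := cbg_diam hm hn hmn
  have step : ∀ u v : Fin m ⊕ Fin n, c v = c u + 1 → u.isLeft = v.isLeft := by
    intro u v hcv
    by_contra hside
    have hne : u ≠ v := fun h => by rw [h] at hcv; omega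
    have hadj : G.Adj u v := cbg_adj_of_isLeft_ne hside
    have hd : G.dist u v = 1 := SimpleGraph.dist_eq_one_iff_adj.mpr hadj
    have := hcond u v hne
    rw [hdiam, hd, hcv] at this
    have habs : |(c u : ℤ) - ((c u : ℤ) + 1)| = 1 := by
      simp
    push_cast at this
    rw [habs] at this
    norm_num at this
  -- all vertices are on the same side as the vertex labeled 1
  obtain ⟨u₁, hu₁⟩ := hsurj 1 le_rfl (by omega)
  have chain : ∀ k, ∀ v : Fin m ⊕ Fin n, c v = k + 1 → k + 1 ≤ m + n →
      v.isLeft = u₁.isLeft := by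
    intro k
    induction k with
    | zero =>
      intro v hv _
      have : v = u₁ := hinj (by omega)
      rw [this]
    | succ k ih =>
      intro v hv hk
      obtain ⟨w, hw⟩ := hsurj (k + 1) (by omega) (by omega)
      have h1 : w.isLeft = v.isLeft := step w v (by omega)
      rw [← h1]
      exact ih w hw (by omega)
  have hall : ∀ v : Fin m ⊕ Fin n, v.isLeft = u₁.isLeft := by
    intro v
    have h1 := hpos v
    have h2 := hsup v
    exact chain (c v - 1) v (by omega) (by omega)
  have h1 := hall (inl ⟨0, hm⟩)
  have h2 := hall (inr ⟨0, hn⟩)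
  rw [← h2] at h1
  simp at h1

private lemma cbg_upper (hm : 1 ≤ m) (hn : 1 ≤ n) (hmn : 3 ≤ m + n) :
    ∃ c : Fin m ⊕ Fin n → ℕ,
      IsRadioLabeling (completeBipartiteGraph (Fin m) (Fin n)) c ∧
      m + n + 1 = Finset.univ.sup c := by
  set G := completeBipartiteGraph (Fin m) (Fin n) with hG
  refine ⟨Sum.elim (fun i => (i : ℕ) + 1) (fun j => m + 2 + (j : ℕ)), ⟨?_, ?_, ?_⟩, ?_⟩
  · -- injective
    rintro (i | j) (i' | j') h <;> simp at h
    · exact congrArg inl (Fin.ext h)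
    · have := i.isLt; omega
    · have := i'.isLt; omega
    · exact congrArg inr (Fin.ext h)
  · rintro (i | j) <;> simp <;> omega
  · have hdiam : G.diam = 2 := cbg_diam hm hn hmn
    rintro (i | j) (i' | j') hne <;> rw [hdiam] <;> simp only [Sum.elim_inl, Sum.elim_inr]
    · have hii : i ≠ i' := fun h => hne (congrArg inl h)
      have hd : 2 ≤ G.dist (inl i) (inl i') :=
        cbg_two_le_dist hm hn hne (by simp [hG])
      have habs : 1 ≤ |((i : ℕ) + 1 : ℤ) - ((i' : ℕ) + 1)| := by
        apply Int.one_le_abs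
        have : (i : ℕ) ≠ (i' : ℕ) := fun h => hii (Fin.ext h)
        omega
      have : (2 : ℤ) ≤ G.dist (inl i) (inl i') := by exact_mod_cast hd
      push_cast
      linarith
    · have hd : G.dist (inl i) (inr j') = 1 :=
        SimpleGraph.dist_eq_one_iff_adj.mpr (by simp [hG])
      rw [hd]
      have hi := i.isLt
      have habs : 2 ≤ |((i : ℕ) + 1 : ℤ) - (m + 2 + (j' : ℕ))| := by
        rw [abs_sub_comm]
        have : ((i : ℕ) : ℤ) < m := by exact_mod_cast hi
        rw [abs_of_nonneg (by omega)]
        omega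
      push_cast
      push_cast at habs
      linarith
    · have hd : G.dist (inr j) (inl i') = 1 :=
        SimpleGraph.dist_eq_one_iff_adj.mpr (by simp [hG])
      rw [hd]
      have hi := i'.isLt
      have habs : 2 ≤ |(m + 2 + (j : ℕ) : ℤ) - ((i' : ℕ) + 1)| := by
        have : ((i' : ℕ) : ℤ) < m := by exact_mod_cast hi
        rw [abs_of_nonneg (by omega)]
        omega
      push_cast
      push_cast at habs
      linarith
    · have hjj : j ≠ j' := fun h => hne (congrArg inr h)
      have hd : 2 ≤ G.dist (inr j) (inr j') :=
        cbg_two_le_dist hm hn hne (by simp [hG])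
      have habs : 1 ≤ |(m + 2 + (j : ℕ) : ℤ) - (m + 2 + (j' : ℕ))| := by
        apply Int.one_le_abs
        have : (j : ℕ) ≠ (j' : ℕ) := fun h => hjj (Fin.ext h)
        omega
      have : (2 : ℤ) ≤ G.dist (inr j) (inr j') := by exact_mod_cast hd
      push_cast
      linarith
  · -- sup
    apply le_antisymm
    · have hj : n - 1 < n := by omega
      have := Finset.le_sup (f := Sum.elim (fun i : Fin m => (i : ℕ) + 1)
        (fun j : Fin n => m + 2 + (j : ℕ))) (Finset.mem_univ (inr ⟨n - 1, hj⟩))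
      rw [Sum.elim_inr] at this
      have hjv : ((⟨n - 1, hj⟩ : Fin n) : ℕ) = n - 1 := rfl
      omega
    · apply Finset.sup_le
      rintro (i | j) _ <;> simp
      · have := i.isLt; omega
      · have := j.isLt; omega

end Main

/-- The radio number of the complete bipartite graph `K_{m,n}` is `m + n + 1`,
for positive `m`, `n` with `m + n ≥ 3`. -/
theorem radioNumber_completeBipartite (m n : ℕ) (hm : 1 ≤ m) (hn : 1 ≤ n)
    (hmn : 3 ≤ m + n) :
    radioNumber (completeBipartiteGraph (Fin m) (Fin n)) = m + n + 1 := by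
  obtain ⟨c, hc, hsup⟩ := cbg_upper hm hn hmn
  apply le_antisymm
  · exact Nat.sInf_le ⟨c, hc, hsup⟩
  · refine le_csInf ⟨m + n + 1, ⟨c, hc, hsup⟩⟩ ?_
    rintro s ⟨c', hc', rfl⟩
    exact cbg_lower hm hn hmn c' hc'
end

section
/- For every n ≥ 4, the radio number of the gear graph G_n is at least 4n + 2, i.e., rn(G_n) ≥ 4n + 2. -/
/-- The gear graph `G_n`: the center `none` is adjacent to each `v i = some (Sum.inl i)`,
and each `w i = some (Sum.inr i)` is adjacent to `v i` and `v (i+1)` (indices mod `n`);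
thus the `v`'s and `w`'s alternate around a cycle of length `2n`. -/
def gearGraph (n : ℕ) : SimpleGraph (Option (Fin n ⊕ Fin n)) :=
  SimpleGraph.fromRel (fun u v =>
    (∃ i : Fin n, u = none ∧ v = some (Sum.inl i)) ∨
    (∃ i j : Fin n, u = some (Sum.inr i) ∧ v = some (Sum.inl j) ∧
      (j = i ∨ (i.val + 1) % n = j.val)))

namespace GearLower

variable {n : ℕ}

lemma adj_zv (i : Fin n) : (gearGraph n).Adj none (some (Sum.inl i)) := by
  rw [gearGraph, SimpleGraph.fromRel_adj]
  exact ⟨by simp, Or.inl (Or.inl ⟨i, rfl, rfl⟩)⟩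

lemma adj_wv (i : Fin n) : (gearGraph n).Adj (some (Sum.inr i)) (some (Sum.inl i)) := by
  rw [gearGraph, SimpleGraph.fromRel_adj]
  exact ⟨by simp, Or.inl (Or.inr ⟨i, i, rfl, rfl, Or.inl rfl⟩)⟩

lemma dist_zv (i : Fin n) : (gearGraph n).dist none (some (Sum.inl i)) ≤ 1 := by
  simpa using SimpleGraph.dist_le (adj_zv i).toWalk

lemma dist_zw (i : Fin n) : (gearGraph n).dist none (some (Sum.inr i)) ≤ 2 := by
  simpa using SimpleGraph.dist_le
    (SimpleGraph.Walk.cons (adj_zv i)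
      (SimpleGraph.Walk.cons (adj_wv i).symm SimpleGraph.Walk.nil))

lemma dist_vv (i j : Fin n) :
    (gearGraph n).dist (some (Sum.inl i)) (some (Sum.inl j)) ≤ 2 := by
  simpa using SimpleGraph.dist_le
    (SimpleGraph.Walk.cons (adj_zv i).symm
      (SimpleGraph.Walk.cons (adj_zv j) SimpleGraph.Walk.nil))

lemma dist_vw (i j : Fin n) :
    (gearGraph n).dist (some (Sum.inl i)) (some (Sum.inr j)) ≤ 3 := by
  simpa using SimpleGraph.dist_le
    (SimpleGraph.Walk.cons (adj_zv i).symm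
      (SimpleGraph.Walk.cons (adj_zv j)
        (SimpleGraph.Walk.cons (adj_wv j).symm SimpleGraph.Walk.nil)))

lemma reach_from_center (u : Option (Fin n ⊕ Fin n)) : (gearGraph n).Reachable none u := by
  match u with
  | none => exact SimpleGraph.Reachable.refl _
  | some (Sum.inl i) => exact ⟨(adj_zv i).toWalk⟩
  | some (Sum.inr i) =>
      exact ⟨SimpleGraph.Walk.cons (adj_zv i)
        (SimpleGraph.Walk.cons (adj_wv i).symm SimpleGraph.Walk.nil)⟩

lemma preconn : (gearGraph n).Preconnected :=
  fun u v => (reach_from_center u).symm.trans (reach_from_center v)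

/-- A 1-Lipschitz potential separating `w 0` and `w 2` by 4. -/
def phi (n : ℕ) : Option (Fin n ⊕ Fin n) → ℤ
  | none => 2
  | some (Sum.inl i) => if i.val ≤ 1 then 1 else if i.val ≤ 3 then 3 else 2
  | some (Sum.inr i) => if i.val = 0 then 0 else if i.val = 2 then 4 else 2

lemma phi_rel (hn : 4 ≤ n) (u v : Option (Fin n ⊕ Fin n))
    (h : (∃ i : Fin n, u = none ∧ v = some (Sum.inl i)) ∨
    (∃ i j : Fin n, u = some (Sum.inr i) ∧ v = some (Sum.inl j) ∧
      (j = i ∨ (i.val + 1) % n = j.val))) : |phi n u - phi n v| ≤ 1 := by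
  rcases h with ⟨i, rfl, rfl⟩ | ⟨i, j, rfl, rfl, hj⟩
  · simp only [phi]
    rw [abs_le]
    split_ifs <;> omega
  · have hi := i.isLt
    have hj' := j.isLt
    have hsplit : j.val = i.val ∨ i.val + 1 = j.val ∨ (i.val + 1 = n ∧ j.val = 0) := by
      rcases hj with rfl | hmod
      · left; rfl
      · rcases Nat.lt_or_ge (i.val + 1) n with h' | h'
        · right; left; rwa [Nat.mod_eq_of_lt h'] at hmod
        · have hin : i.val + 1 = n := by omega
          right; right
          refine ⟨hin, ?_⟩
          rw [hin, Nat.mod_self] at hmod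
          omega
    simp only [phi]
    rw [abs_le]
    split_ifs <;> omega

lemma phi_adj (hn : 4 ≤ n) {u v : Option (Fin n ⊕ Fin n)}
    (h : (gearGraph n).Adj u v) : |phi n u - phi n v| ≤ 1 := by
  rw [gearGraph, SimpleGraph.fromRel_adj] at h
  rcases h.2 with h' | h'
  · exact phi_rel hn u v h'
  · rw [abs_sub_comm]; exact phi_rel hn v u h'

lemma phi_walk (hn : 4 ≤ n) {u v : Option (Fin n ⊕ Fin n)}
    (p : (gearGraph n).Walk u v) : |phi n u - phi n v| ≤ p.length := by
  induction p with
  | nil => simp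
  | @cons a b c h q ih =>
      have h1 := phi_adj hn h
      have h2 := abs_sub_le (phi n a) (phi n b) (phi n c)
      rw [SimpleGraph.Walk.length_cons]
      push_cast
      linarith

lemma dist_w0w2 (hn : 4 ≤ n) :
    4 ≤ (gearGraph n).dist (some (Sum.inr ⟨0, by omega⟩)) (some (Sum.inr ⟨2, by omega⟩)) := by
  obtain ⟨p, hp⟩ := SimpleGraph.Reachable.exists_walk_length_eq_dist
    (((reach_from_center (n := n) (some (Sum.inr ⟨0, by omega⟩))).symm).trans
      (reach_from_center (n := n) (some (Sum.inr ⟨2, by omega⟩))))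
  have h := phi_walk hn p
  rw [hp] at h
  simp only [phi] at h
  norm_num at h
  exact_mod_cast h

lemma diam_ge (hn : 4 ≤ n) : 4 ≤ (gearGraph n).diam := by
  have hne : (gearGraph n).ediam ≠ ⊤ := by
    obtain ⟨u, v, huv⟩ := SimpleGraph.exists_edist_eq_ediam_of_finite (G := gearGraph n)
    rw [← huv]
    exact SimpleGraph.edist_ne_top_iff_reachable.mpr (preconn u v)
  exact le_trans (dist_w0w2 hn) (SimpleGraph.dist_le_diam hne)

lemma sum_ite_single {m : ℕ} (i0 : Fin m) (a b : ℤ) :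
    ∑ i : Fin m, (if i = i0 then a else b) = b * m + (a - b) := by
  have : ∀ i : Fin m, (if i = i0 then a else b) = (if i = i0 then a - b else 0) + b := by
    intro i; split_ifs <;> ring
  rw [Finset.sum_congr rfl fun i _ => this i, Finset.sum_add_distrib,
    Fintype.sum_ite_eq' i0 (fun _ => a - b), Finset.sum_const,
    Finset.card_univ, Fintype.card_fin]
  push_cast [nsmul_eq_mul]
  ring

end GearLower

open GearLower in
/-- For `n ≥ 4`, the radio number of the gear graph `G_n` is at least `4n + 2`. -/
theorem radioNumber_gear_lower (n : ℕ) (hn : 4 ≤ n) :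
    4 * n + 2 ≤ radioNumber (gearGraph n) := by
  have hdiam : 4 ≤ (gearGraph n).diam := diam_ge hn
  apply le_csInf
  · -- the set of spans is nonempty
    set D := (gearGraph n).diam with hD
    set e := Fintype.equivFin (Option (Fin n ⊕ Fin n)) with he
    refine ⟨Finset.univ.sup (fun v => (D + 1) * (e v : ℕ) + 1),
      ⟨fun v => (D + 1) * (e v : ℕ) + 1, ⟨?_, ?_, ?_⟩, rfl⟩⟩
    · intro a b h
      simp only at h
      have h2 : (D + 1) * (e a : ℕ) = (D + 1) * (e b : ℕ) := by omega
      have h3 : (e a : ℕ) = (e b : ℕ) := Nat.eq_of_mul_eq_mul_left (Nat.succ_pos D) h2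
      exact e.injective (Fin.val_injective h3)
    · intro v; exact Nat.le_add_left 1 _
    · intro u v huv
      have h1 : (e u : ℕ) ≠ (e v : ℕ) := fun h => huv (e.injective (Fin.val_injective h))
      have h2 : (1 : ℤ) ≤ |((e u : ℕ) : ℤ) - ((e v : ℕ) : ℤ)| := by
        have : ((e u : ℕ) : ℤ) ≠ ((e v : ℕ) : ℤ) := by exact_mod_cast h1
        exact Int.one_le_abs (sub_ne_zero.mpr this)
      have h3 : (0 : ℤ) ≤ ((gearGraph n).dist u v : ℤ) := Int.natCast_nonneg _
      have h4 : |((D + 1) * (e u : ℕ) + 1 : ℤ) - ((D + 1) * (e v : ℕ) + 1)| =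
          ((D : ℤ) + 1) * |((e u : ℕ) : ℤ) - ((e v : ℕ) : ℤ)| := by
        rw [show ((D + 1) * (e u : ℕ) + 1 : ℤ) - ((D + 1) * (e v : ℕ) + 1) =
          ((D : ℤ) + 1) * (((e u : ℕ) : ℤ) - ((e v : ℕ) : ℤ)) by ring, abs_mul,
          abs_of_nonneg (by positivity)]
      have h5 : ((D : ℤ) + 1) ≤ ((D : ℤ) + 1) * |((e u : ℕ) : ℤ) - ((e v : ℕ) : ℤ)| := by
        nlinarith [abs_nonneg (((e u : ℕ) : ℤ) - ((e v : ℕ) : ℤ))]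
      push_cast
      push_cast at h4
      rw [h4]
      linarith
  rintro s ⟨c, ⟨hinj, hpos, hrad⟩, rfl⟩
  set S : ℕ := Finset.univ.sup c with hS
  have hle : ∀ x, c x ≤ S := fun x => Finset.le_sup (Finset.mem_univ x)
  set Sz : ℤ := (S : ℤ) with hSz
  set Z : ℤ := (c none : ℤ) with hZ
  set V : Fin n → ℤ := fun i => (c (some (Sum.inl i)) : ℤ) with hV
  set W : Fin n → ℤ := fun i => (c (some (Sum.inr i)) : ℤ) with hW
  -- basic bounds on labels
  have hZ1 : 1 ≤ Z := by rw [hZ]; exact_mod_cast hpos none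
  have hZS : Z ≤ Sz := by rw [hZ, hSz]; exact_mod_cast hle none
  have hV1 : ∀ i, 1 ≤ V i := fun i => by simp only [hV]; exact_mod_cast hpos (some (Sum.inl i))
  have hVS : ∀ i, V i ≤ Sz := fun i => by
    simp only [hV, hSz]; exact_mod_cast hle (some (Sum.inl i))
  have hW1 : ∀ i, 1 ≤ W i := fun i => by simp only [hW]; exact_mod_cast hpos (some (Sum.inr i))
  have hWS : ∀ i, W i ≤ Sz := fun i => by
    simp only [hW, hSz]; exact_mod_cast hle (some (Sum.inr i))
  -- derived gap constraints
  have key : ∀ u v, u ≠ v → ∀ k : ℕ, (gearGraph n).dist u v ≤ k →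
      (5 : ℤ) - k ≤ |(c u : ℤ) - (c v : ℤ)| := by
    intro u v huv k hk
    have h := hrad u v huv
    have h1 : ((gearGraph n).dist u v : ℤ) ≤ (k : ℤ) := by exact_mod_cast hk
    have h2 : (4 : ℤ) ≤ ((gearGraph n).diam : ℤ) := by exact_mod_cast hdiam
    linarith
  have hZV : ∀ i, 4 ≤ Z - V i ∨ 4 ≤ V i - Z := by
    intro i
    have h := key none (some (Sum.inl i)) (by simp) 1 (dist_zv i)
    have h4 : (4 : ℤ) ≤ |Z - V i| := by push_cast at h; linarith [h]
    rcases le_abs.mp h4 with h' | h'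
    · exact Or.inl h'
    · exact Or.inr (by linarith)
  have hZW : ∀ i, 3 ≤ Z - W i ∨ 3 ≤ W i - Z := by
    intro i
    have h := key none (some (Sum.inr i)) (by simp) 2 (dist_zw i)
    have h4 : (3 : ℤ) ≤ |Z - W i| := by push_cast at h; linarith [h]
    rcases le_abs.mp h4 with h' | h'
    · exact Or.inl h'
    · exact Or.inr (by linarith)
  have hVV : ∀ i j, i ≠ j → 3 ≤ V i - V j ∨ 3 ≤ V j - V i := by
    intro i j hij
    have hne : (some (Sum.inl i) : Option (Fin n ⊕ Fin n)) ≠ some (Sum.inl j) := by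
      simp only [ne_eq, Option.some.injEq, Sum.inl.injEq]; exact hij
    have h := key _ _ hne 2 (dist_vv i j)
    have h4 : (3 : ℤ) ≤ |V i - V j| := by push_cast at h; linarith [h]
    rcases le_abs.mp h4 with h' | h'
    · exact Or.inl h'
    · exact Or.inr (by linarith)
  have hVW : ∀ i j, 2 ≤ V i - W j ∨ 2 ≤ W j - V i := by
    intro i j
    have hne : (some (Sum.inl i) : Option (Fin n ⊕ Fin n)) ≠ some (Sum.inr j) := by simp
    have h := key _ _ hne 3 (dist_vw i j)
    have h4 : (2 : ℤ) ≤ |V i - W j| := by push_cast at h; linarith [h]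
    rcases le_abs.mp h4 with h' | h'
    · exact Or.inl h'
    · exact Or.inr (by linarith)
  have hVinj : Function.Injective V := by
    intro a b hab
    by_contra hne
    rcases hVV a b hne with h | h <;> omega
  have hS5 : 5 ≤ Sz := by
    have h0 := hZV ⟨0, by omega⟩
    have h1 := hV1 ⟨0, by omega⟩
    have h2 := hVS ⟨0, by omega⟩
    rcases h0 with h | h <;> omega
  -- the forbidden intervals
  set Jv : Fin n → Finset ℤ :=
    fun i => Finset.Icc (max (V i - 1) 1) (min (V i + 1) Sz) with hJv
  set Jz : Finset ℤ := Finset.Icc (max (Z - 2) 1) (min (Z + 2) Sz) with hJz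
  have cardJv : ∀ i, (Jv i).card = (min (V i + 1) Sz + 1 - max (V i - 1) 1).toNat :=
    fun i => Int.card_Icc _ _
  have cardJz : Jz.card = (min (Z + 2) Sz + 1 - max (Z - 2) 1).toNat := Int.card_Icc _ _
  set F : Finset ℤ := (Finset.univ.biUnion Jv) ∪ Jz with hF
  -- disjointness
  have hdisjvv : ∀ i ∈ Finset.univ, ∀ j ∈ Finset.univ,
      i ≠ j → Disjoint (Jv i) (Jv j) := by
    intro i _ j _ hij
    rw [Finset.disjoint_left]
    intro x hx hx'
    rw [hJv] at hx hx'
    rw [Finset.mem_Icc] at hx hx'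
    rcases hVV i j hij with h | h <;> omega
  have hdisjz : Disjoint (Finset.univ.biUnion Jv) Jz := by
    rw [Finset.disjoint_biUnion_left]
    intro i _
    rw [Finset.disjoint_left]
    intro x hx hx'
    rw [hJv] at hx
    rw [hJz] at hx'
    rw [Finset.mem_Icc] at hx hx'
    rcases hZV i with h | h <;> omega
  have cardF : F.card = (∑ i, (Jv i).card) + Jz.card := by
    rw [hF, Finset.card_union_of_disjoint hdisjz, Finset.card_biUnion hdisjvv]
  have hFsub : F ⊆ Finset.Icc 1 Sz := by
    rw [hF]
    apply Finset.union_subset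
    · apply Finset.biUnion_subset.mpr
      intro i _
      rw [hJv]
      intro x hx
      rw [Finset.mem_Icc] at hx
      rw [Finset.mem_Icc]
      have := hV1 i; have := hVS i
      omega
    · rw [hJz]
      intro x hx
      rw [Finset.mem_Icc] at hx
      rw [Finset.mem_Icc]
      omega
  -- the w-labels avoid F
  set Wset : Finset ℤ := Finset.univ.image W with hWset
  have hWinj : Function.Injective W := by
    intro a b hab
    simp only [hW] at hab
    have : c (some (Sum.inr a)) = c (some (Sum.inr b)) := by exact_mod_cast hab
    have := hinj this
    simpa using this
  have hWcard : Wset.card = n := by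
    rw [hWset, Finset.card_image_of_injective _ hWinj, Finset.card_univ, Fintype.card_fin]
  have hWsub : Wset ⊆ Finset.Icc 1 Sz \ F := by
    intro x hx
    rw [hWset] at hx
    obtain ⟨i, _, rfl⟩ := Finset.mem_image.mp hx
    rw [Finset.mem_sdiff]
    constructor
    · rw [Finset.mem_Icc]; exact ⟨hW1 i, hWS i⟩
    · intro hmem
      rw [hF, Finset.mem_union] at hmem
      rcases hmem with h | h
      · obtain ⟨j, _, hj⟩ := Finset.mem_biUnion.mp h
        rw [hJv, Finset.mem_Icc] at hj
        rcases hVW j i with h' | h' <;> omega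
      · rw [hJz, Finset.mem_Icc] at h
        rcases hZW i with h' | h' <;> omega
  -- counting
  have hIcc : ((Finset.Icc (1 : ℤ) Sz).card : ℤ) = Sz := by
    rw [Int.card_Icc]; omega
  have hcount : (n : ℤ) + F.card ≤ Sz := by
    have h1 := Finset.card_le_card hWsub
    rw [Finset.card_sdiff_of_subset hFsub, hWcard] at h1
    have h2 := Finset.card_le_card hFsub
    omega
  -- lower bound on the size of F
  have hJv3 : ∀ i, V i ≠ 1 → V i ≠ Sz → ((Jv i).card : ℤ) = 3 := by
    intro i h1 h2
    have := hV1 i; have := hVS i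
    rw [cardJv i]
    omega
  have hJv2 : ∀ i, (2 : ℤ) ≤ (Jv i).card := by
    intro i
    have := hV1 i; have := hVS i
    rw [cardJv i]
    omega
  have hJzcard2 : (2 : ℤ) ≤ Jz.card := by rw [cardJz]; omega
  have hmain : (3 * n + 2 : ℤ) ≤ (∑ i, ((Jv i).card : ℤ)) + Jz.card := by
    by_cases h1 : ∃ i, V i = 1 <;> by_cases h2 : ∃ i, V i = Sz
    · -- both extremes are v-labels: Jz has full size 5
      obtain ⟨i1, hi1⟩ := h1
      obtain ⟨i2, hi2⟩ := h2
      have hne12 : i1 ≠ i2 := by intro h; rw [h, hi2] at hi1; omega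
      have hZ5 : 5 ≤ Z := by rcases hZV i1 with h | h <;> omega
      have hZS4 : Z ≤ Sz - 4 := by rcases hZV i2 with h | h <;> omega
      have hJz5 : (5 : ℤ) ≤ Jz.card := by rw [cardJz]; omega
      have hsum : (∑ i, (if i = i1 then (2 : ℤ) else if i = i2 then 2 else 3))
          ≤ ∑ i, ((Jv i).card : ℤ) := by
        apply Finset.sum_le_sum
        intro i _
        by_cases hh1 : i = i1
        · rw [if_pos hh1]; exact hJv2 i
        by_cases hh2 : i = i2
        · rw [if_neg hh1, if_pos hh2]; exact hJv2 i
        · rw [if_neg hh1, if_neg hh2]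
          exact le_of_eq (hJv3 i (fun h => hh1 (hVinj (by rw [h, hi1])))
            (fun h => hh2 (hVinj (by rw [h, hi2])))).symm
      have heval : (∑ i, (if i = i1 then (2 : ℤ) else if i = i2 then 2 else 3))
          = 3 * n - 2 := by
        have : ∀ i : Fin n, (if i = i1 then (2 : ℤ) else if i = i2 then 2 else 3)
            = (if i = i1 then (-1 : ℤ) else 0) + (if i = i2 then (-1 : ℤ) else 0) + 3 := by
          intro i
          split_ifs with u1 u2
          · exact absurd (u1.symm.trans u2) hne12
          all_goals norm_num
        rw [Finset.sum_congr rfl fun i _ => this i]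
        rw [Finset.sum_add_distrib, Finset.sum_add_distrib,
          Fintype.sum_ite_eq' i1 (fun _ => (-1 : ℤ)),
          Fintype.sum_ite_eq' i2 (fun _ => (-1 : ℤ)),
          Finset.sum_const, Finset.card_univ, Fintype.card_fin]
        push_cast [nsmul_eq_mul]
        ring
      omega
    · -- only 1 is a v-label
      obtain ⟨i1, hi1⟩ := h1
      have hZ5 : 5 ≤ Z := by rcases hZV i1 with h | h <;> omega
      have hJz3 : (3 : ℤ) ≤ Jz.card := by rw [cardJz]; omega
      have hsum : (∑ i, (if i = i1 then (2 : ℤ) else 3)) ≤ ∑ i, ((Jv i).card : ℤ) := by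
        apply Finset.sum_le_sum
        intro i _
        by_cases hh1 : i = i1
        · rw [if_pos hh1]; exact hJv2 i
        · rw [if_neg hh1]
          exact le_of_eq (hJv3 i (fun h => hh1 (hVinj (by rw [h, hi1])))
            (fun h => h2 ⟨i, h⟩)).symm
      rw [GearLower.sum_ite_single i1 2 3] at hsum
      omega
    · -- only Sz is a v-label
      obtain ⟨i2, hi2⟩ := h2
      have hZS4 : Z ≤ Sz - 4 := by rcases hZV i2 with h | h <;> omega
      have hJz3 : (3 : ℤ) ≤ Jz.card := by rw [cardJz]; omega
      have hsum : (∑ i, (if i = i2 then (2 : ℤ) else 3)) ≤ ∑ i, ((Jv i).card : ℤ) := by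
        apply Finset.sum_le_sum
        intro i _
        by_cases hh2 : i = i2
        · rw [if_pos hh2]; exact hJv2 i
        · rw [if_neg hh2]
          exact le_of_eq (hJv3 i (fun h => h1 ⟨i, h⟩)
            (fun h => hh2 (hVinj (by rw [h, hi2])))).symm
      rw [GearLower.sum_ite_single i2 2 3] at hsum
      omega
    · -- neither extreme is a v-label
      have hsum : (∑ _i : Fin n, (3 : ℤ)) ≤ ∑ i, ((Jv i).card : ℤ) := by
        apply Finset.sum_le_sum
        intro i _
        exact le_of_eq (hJv3 i (fun h => h1 ⟨i, h⟩) (fun h => h2 ⟨i, h⟩)).symm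
      rw [Finset.sum_const, Finset.card_univ, Fintype.card_fin, nsmul_eq_mul] at hsum
      omega
  -- conclude
  have hFcard : (3 * n + 2 : ℤ) ≤ F.card := by
    rw [cardF]
    push_cast
    omega
  omega
end

section
/- For every n ≥ 7, the radio number of the gear graph G_n is at most 4n + 2, i.e., rn(G_n) ≤ 4n + 2. -/
namespace GearAux

open SimpleGraph

variable {n : ℕ}

/-- position of `w j` in the w-ordering -/
def rho (n j : ℕ) : ℕ := if j % 2 = 0 then j / 2 else (n + 1) / 2 + j / 2

/-- position of `v i` in the v-ordering -/
def aFun (n x : ℕ) : ℕ := (x + n - 1) % n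

/-- the radio labeling -/
def cLab (n : ℕ) : Option (Fin n ⊕ Fin n) → ℕ
  | none => 1
  | some (Sum.inl i) => n + 5 + 3 * aFun n i.val
  | some (Sum.inr j) => 4 + rho n j.val

lemma aFun_eq (hn : 1 ≤ n) {x : ℕ} (hx : x < n) :
    aFun n x = if x = 0 then n - 1 else x - 1 := by
  unfold aFun
  rcases Nat.eq_zero_or_pos x with h | h
  · subst h; rw [if_pos rfl]; simp [Nat.mod_eq_of_lt (by omega : 0 + n - 1 < n)]
  · have h1 : x + n - 1 = (x - 1) + n := by omega
    rw [if_neg (by omega), h1, Nat.add_mod_right, Nat.mod_eq_of_lt (by omega)]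

lemma aFun_lt (hn : 1 ≤ n) (x : ℕ) : aFun n x < n := Nat.mod_lt _ (by omega)

lemma aFun_inj (hn : 1 ≤ n) {x y : ℕ} (hx : x < n) (hy : y < n)
    (h : aFun n x = aFun n y) : x = y := by
  rw [aFun_eq hn hx, aFun_eq hn hy] at h
  split_ifs at h <;> omega

lemma rho_lt (hn : 1 ≤ n) {j : ℕ} (hj : j < n) : rho n j < n := by
  unfold rho
  rcases Nat.mod_two_eq_zero_or_one j with h | h <;> simp [h] <;> omega

lemma rho_inj (hn : 1 ≤ n) {j k : ℕ} (hj : j < n) (hk : k < n)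
    (h : rho n j = rho n k) : j = k := by
  unfold rho at h
  rcases Nat.mod_two_eq_zero_or_one j with h1 | h1 <;>
    rcases Nat.mod_two_eq_zero_or_one k with h2 | h2 <;>
      simp [h1, h2] at h <;> omega

lemma rho_gap (hn : 7 ≤ n) {i j : ℕ} (hi : i < n) (hj : j < n) (h : (i + 1) % n = j) :
    rho n j + 3 ≤ rho n i ∨ rho n i + 3 ≤ rho n j := by
  have hij : j = i + 1 ∨ (i + 1 = n ∧ j = 0) := by
    rcases Nat.lt_or_ge (i + 1) n with h' | h'
    · left; rw [Nat.mod_eq_of_lt h'] at h; omega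
    · right
      have hi1 : i + 1 = n := by omega
      rw [hi1, Nat.mod_self] at h; omega
  unfold rho
  rcases Nat.mod_two_eq_zero_or_one i with h1 | h1 <;>
    rcases Nat.mod_two_eq_zero_or_one j with h2 | h2 <;>
      simp [h1, h2] <;> omega

lemma succ_mod_inj (hn : 1 ≤ n) {i j : ℕ} (hi : i < n) (hj : j < n)
    (h : (i + 1) % n = (j + 1) % n) : i = j := by
  rcases Nat.lt_or_ge (i + 1) n with h1 | h1 <;> rcases Nat.lt_or_ge (j + 1) n with h2 | h2
  · rw [Nat.mod_eq_of_lt h1, Nat.mod_eq_of_lt h2] at h; omega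
  · have hj1 : j + 1 = n := by omega
    rw [Nat.mod_eq_of_lt h1, hj1, Nat.mod_self] at h; omega
  · have hi1 : i + 1 = n := by omega
    rw [hi1, Nat.mod_self, Nat.mod_eq_of_lt h2] at h; omega
  · omega

/-! ### adjacency lemmas -/

lemma adj_zv (i : Fin n) : (gearGraph n).Adj none (some (Sum.inl i)) := by
  simp only [gearGraph, SimpleGraph.fromRel_adj]
  exact ⟨by simp, Or.inl (Or.inl ⟨i, trivial, rfl⟩)⟩

lemma adj_wv (i j : Fin n) (h : j = i ∨ (i.val + 1) % n = j.val) :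
    (gearGraph n).Adj (some (Sum.inr i)) (some (Sum.inl j)) := by
  simp only [gearGraph, SimpleGraph.fromRel_adj]
  exact ⟨by simp, Or.inl (Or.inr ⟨i, j, rfl, rfl, h⟩)⟩

lemma adj_elim {u v : Option (Fin n ⊕ Fin n)} (h : (gearGraph n).Adj u v) :
    (∃ i : Fin n, (u = none ∧ v = some (Sum.inl i)) ∨ (v = none ∧ u = some (Sum.inl i))) ∨
    (∃ i j : Fin n,
      ((u = some (Sum.inr i) ∧ v = some (Sum.inl j)) ∨
       (v = some (Sum.inr i) ∧ u = some (Sum.inl j))) ∧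
      (j = i ∨ (i.val + 1) % n = j.val)) := by
  simp only [gearGraph, SimpleGraph.fromRel_adj] at h
  rcases h.2 with (⟨i, h1, h2⟩ | ⟨i, j, h1, h2, h3⟩) | (⟨i, h1, h2⟩ | ⟨i, j, h1, h2, h3⟩)
  · exact Or.inl ⟨i, Or.inl ⟨h1, h2⟩⟩
  · exact Or.inr ⟨i, j, Or.inl ⟨h1, h2⟩, h3⟩
  · exact Or.inl ⟨i, Or.inr ⟨h1, h2⟩⟩
  · exact Or.inr ⟨i, j, Or.inr ⟨h1, h2⟩, h3⟩

lemma not_adj_zw (j : Fin n) : ¬ (gearGraph n).Adj none (some (Sum.inr j)) := by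
  intro h
  rcases adj_elim h with ⟨i, ⟨h1, h2⟩ | ⟨h1, h2⟩⟩ | ⟨a, b, ⟨h1, h2⟩ | ⟨h1, h2⟩, -⟩ <;> simp_all

lemma not_adj_vv (i j : Fin n) :
    ¬ (gearGraph n).Adj (some (Sum.inl i)) (some (Sum.inl j)) := by
  intro h
  rcases adj_elim h with ⟨k, ⟨h1, h2⟩ | ⟨h1, h2⟩⟩ | ⟨a, b, ⟨h1, h2⟩ | ⟨h1, h2⟩, -⟩ <;> simp_all

lemma not_adj_ww (i j : Fin n) :
    ¬ (gearGraph n).Adj (some (Sum.inr i)) (some (Sum.inr j)) := by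
  intro h
  rcases adj_elim h with ⟨k, ⟨h1, h2⟩ | ⟨h1, h2⟩⟩ | ⟨a, b, ⟨h1, h2⟩ | ⟨h1, h2⟩, -⟩ <;> simp_all

lemma adj_vw_iff (i j : Fin n) :
    (gearGraph n).Adj (some (Sum.inl i)) (some (Sum.inr j)) ↔
      (i = j ∨ (j.val + 1) % n = i.val) := by
  constructor
  · intro h
    rcases adj_elim h with ⟨k, ⟨h1, h2⟩ | ⟨h1, h2⟩⟩ | ⟨a, b, ⟨h1, h2⟩ | ⟨h1, h2⟩, h3⟩ <;>
      simp_all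
  · intro h
    exact (adj_wv j i h).symm

lemma adj_to_w {x : Option (Fin n ⊕ Fin n)} (j : Fin n)
    (h : (gearGraph n).Adj x (some (Sum.inr j))) :
    ∃ k : Fin n, x = some (Sum.inl k) ∧ (k = j ∨ (j.val + 1) % n = k.val) := by
  rcases adj_elim h with ⟨k, ⟨h1, h2⟩ | ⟨h1, h2⟩⟩ | ⟨a, b, ⟨h1, h2⟩ | ⟨h1, h2⟩, h3⟩ <;>
    simp_all

/-! ### parity -/

def par : Option (Fin n ⊕ Fin n) → ZMod 2
  | some (Sum.inl _) => 1
  | _ => 0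

lemma par_adj {u v : Option (Fin n ⊕ Fin n)} (h : (gearGraph n).Adj u v) :
    par u + par v = 1 := by
  rcases adj_elim h with ⟨i, ⟨h1, h2⟩ | ⟨h1, h2⟩⟩ | ⟨a, b, ⟨h1, h2⟩ | ⟨h1, h2⟩, -⟩ <;>
    subst h1 <;> subst h2 <;> rfl

lemma walk_par {u v : Option (Fin n ⊕ Fin n)} (p : (gearGraph n).Walk u v) :
    (p.length : ZMod 2) = par u + par v := by
  induction p with
  | nil =>
    simp only [SimpleGraph.Walk.length_nil, Nat.cast_zero]
    have : ∀ x : ZMod 2, 0 = x + x := by decide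
    exact this _
  | cons h q ih =>
    rw [SimpleGraph.Walk.length_cons]
    push_cast
    rw [ih]
    have h1 := par_adj h
    revert h1
    generalize par _ = x
    generalize par _ = y
    generalize par _ = z
    revert x y z
    decide

/-! ### connectivity and distances -/

lemma reach_none (u : Option (Fin n ⊕ Fin n)) : (gearGraph n).Reachable none u := by
  match u with
  | none => exact Reachable.refl _
  | some (Sum.inl i) => exact (adj_zv i).reachable
  | some (Sum.inr j) =>
    exact (adj_zv j).reachable.trans ((adj_wv j j (Or.inl rfl)).symm.reachable)

lemma conn : (gearGraph n).Connected := by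
  rw [connected_iff]
  exact ⟨fun u v => (reach_none u).symm.trans (reach_none v), ⟨none⟩⟩

lemma edist_none_le (u : Option (Fin n ⊕ Fin n)) : (gearGraph n).edist none u ≤ 2 := by
  match u with
  | none => simp [edist_self]
  | some (Sum.inl i) =>
    calc (gearGraph n).edist none (some (Sum.inl i)) = 1 :=
          edist_eq_one_iff_adj.mpr (adj_zv i)
      _ ≤ 2 := by norm_num
  | some (Sum.inr j) =>
    refine le_trans (edist_le
      (SimpleGraph.Walk.cons (adj_zv j) ((adj_wv j j (Or.inl rfl)).symm.toWalk))) ?_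
    simp

lemma ediam_le4 : (gearGraph n).ediam ≤ 4 := by
  apply ediam_le_of_edist_le
  intro u v
  calc (gearGraph n).edist u v ≤ (gearGraph n).edist u none + (gearGraph n).edist none v :=
        SimpleGraph.edist_triangle
    _ ≤ 2 + 2 := add_le_add (by rw [edist_comm]; exact edist_none_le u) (edist_none_le v)
    _ = 4 := by norm_num

lemma diam_le4 : (gearGraph n).diam ≤ 4 := by
  have h := ENat.toNat_le_toNat (ediam_le4 (n := n)) (by simp)
  simpa [SimpleGraph.diam] using h

lemma dist1 {u v : Option (Fin n ⊕ Fin n)} (h : u ≠ v) : 1 ≤ (gearGraph n).dist u v :=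
  conn.pos_dist_of_ne h

lemma dist2 {u v : Option (Fin n ⊕ Fin n)} (h : u ≠ v) (h2 : ¬ (gearGraph n).Adj u v) :
    2 ≤ (gearGraph n).dist u v := by
  have h1 := dist1 h
  have h3 : (gearGraph n).dist u v ≠ 1 := fun he => h2 (dist_eq_one_iff_adj.mp he)
  omega

lemma dist3 {u v : Option (Fin n ⊕ Fin n)} (h : u ≠ v) (h2 : ¬ (gearGraph n).Adj u v)
    (h3 : ∀ x, ¬((gearGraph n).Adj u x ∧ (gearGraph n).Adj x v)) :
    3 ≤ (gearGraph n).dist u v := by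
  have h2d := dist2 h h2
  obtain ⟨p, hp⟩ := conn.exists_walk_length_eq_dist u v
  cases p with
  | nil => exact absurd rfl h
  | cons hadj q =>
    cases q with
    | nil => exact absurd hadj h2
    | @cons b c _ hadj2 r =>
      rcases Nat.eq_zero_or_pos r.length with h0 | h0
      · have hcv := SimpleGraph.Walk.eq_of_length_eq_zero h0
        subst hcv
        exact absurd ⟨hadj, hadj2⟩ (h3 _)
      · simp only [SimpleGraph.Walk.length_cons] at hp
        omega

lemma dist_ww_even (i j : Fin n) :
    2 ∣ (gearGraph n).dist (some (Sum.inr i)) (some (Sum.inr j)) := by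
  obtain ⟨p, hp⟩ := conn.exists_walk_length_eq_dist (some (Sum.inr i)) (some (Sum.inr j))
  have hpar := walk_par p
  rw [hp] at hpar
  have : (((gearGraph n).dist (some (Sum.inr i)) (some (Sum.inr j)) : ℕ) : ZMod 2) = 0 := by
    rw [hpar]; rfl
  exact (ZMod.natCast_eq_zero_iff _ 2).mp this

/-! ### no common neighbors -/

lemma no_common_vw (i j : Fin n) (x : Option (Fin n ⊕ Fin n)) :
    ¬((gearGraph n).Adj (some (Sum.inl i)) x ∧ (gearGraph n).Adj x (some (Sum.inr j))) := by
  rintro ⟨h1, h2⟩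
  obtain ⟨k, rfl, -⟩ := adj_to_w j h2
  exact not_adj_vv i k h1

lemma no_common_ww (hn : 7 ≤ n) {i j : Fin n} (hne : i ≠ j)
    (hfar : ¬((i.val + 1) % n = j.val ∨ (j.val + 1) % n = i.val))
    (x : Option (Fin n ⊕ Fin n)) :
    ¬((gearGraph n).Adj (some (Sum.inr i)) x ∧ (gearGraph n).Adj x (some (Sum.inr j))) := by
  rintro ⟨h1, h2⟩
  obtain ⟨k, rfl, hk2⟩ := adj_to_w j h2
  have hk1 : k = i ∨ (i.val + 1) % n = k.val := by
    have := (adj_vw_iff k i).mp h1.symm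
    rcases this with h | h
    · exact Or.inl h
    · exact Or.inr h
  push_neg at hfar
  rcases hk1 with rfl | hk1 <;> rcases hk2 with rfl | hk2
  · exact hne rfl
  · exact hfar.2 hk2
  · exact hfar.1 hk1
  · rw [← hk2] at hk1
    exact hne (Fin.ext (succ_mod_inj (by omega) i.isLt j.isLt hk1))

/-! ### the key inequalities -/

lemma key_zv (hn : 7 ≤ n) (i : Fin n) :
    (5 : ℤ) ≤ (gearGraph n).dist none (some (Sum.inl i)) +
      |(cLab n none : ℤ) - cLab n (some (Sum.inl i))| := by
  have hd : 1 ≤ (gearGraph n).dist none (some (Sum.inl i)) := dist1 (by simp)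
  have habs : ((cLab n (some (Sum.inl i)) : ℤ)) - cLab n none ≤
      |(cLab n none : ℤ) - cLab n (some (Sum.inl i))| := by
    rw [abs_sub_comm]; exact le_abs_self _
  simp only [cLab] at habs ⊢
  push_cast at habs ⊢
  omega

lemma key_zw (hn : 7 ≤ n) (j : Fin n) :
    (5 : ℤ) ≤ (gearGraph n).dist none (some (Sum.inr j)) +
      |(cLab n none : ℤ) - cLab n (some (Sum.inr j))| := by
  have hd : 2 ≤ (gearGraph n).dist none (some (Sum.inr j)) :=
    dist2 (by simp) (not_adj_zw j)
  have habs : ((cLab n (some (Sum.inr j)) : ℤ)) - cLab n none ≤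
      |(cLab n none : ℤ) - cLab n (some (Sum.inr j))| := by
    rw [abs_sub_comm]; exact le_abs_self _
  simp only [cLab] at habs ⊢
  push_cast at habs ⊢
  omega

lemma key_vv (hn : 7 ≤ n) {i j : Fin n} (hne : i ≠ j) :
    (5 : ℤ) ≤ (gearGraph n).dist (some (Sum.inl i)) (some (Sum.inl j)) +
      |(cLab n (some (Sum.inl i)) : ℤ) - cLab n (some (Sum.inl j))| := by
  have hd : 2 ≤ (gearGraph n).dist (some (Sum.inl i)) (some (Sum.inl j)) :=
    dist2 (by simp [hne]) (not_adj_vv i j)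
  have hinj : aFun n i.val ≠ aFun n j.val := fun h =>
    hne (Fin.ext (aFun_inj (by omega) i.isLt j.isLt h))
  have habs : 3 ≤ |(cLab n (some (Sum.inl i)) : ℤ) - cLab n (some (Sum.inl j))| := by
    simp only [cLab]
    rcases Nat.lt_or_ge (aFun n i.val) (aFun n j.val) with h | h
    · rw [abs_sub_comm, abs_of_nonneg (by push_cast; omega)]
      push_cast; omega
    · have h' : aFun n j.val < aFun n i.val := by omega
      rw [abs_of_nonneg (by push_cast; omega)]
      push_cast; omega
  omega

lemma key_vw (hn : 7 ≤ n) (i j : Fin n) :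
    (5 : ℤ) ≤ (gearGraph n).dist (some (Sum.inl i)) (some (Sum.inr j)) +
      |(cLab n (some (Sum.inl i)) : ℤ) - cLab n (some (Sum.inr j))| := by
  have hrl : rho n j.val < n := rho_lt (by omega) j.isLt
  have hal : aFun n i.val < n := aFun_lt (by omega) i.val
  have habs : ((cLab n (some (Sum.inl i)) : ℤ)) - cLab n (some (Sum.inr j)) ≤
      |(cLab n (some (Sum.inl i)) : ℤ) - cLab n (some (Sum.inr j))| := le_abs_self _
  rcases Nat.eq_zero_or_pos (aFun n i.val) with ha | ha
  · -- i is the first v; label gap is n + 1 - rho j ≥ 2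
    rcases Nat.lt_or_ge (rho n j.val) (n - 2) with hr | hr
    · -- gap ≥ 4 : distance ≥ 1 suffices
      have hd : 1 ≤ (gearGraph n).dist (some (Sum.inl i)) (some (Sum.inr j)) :=
        dist1 (by simp)
      simp only [cLab] at habs ⊢
      push_cast at habs ⊢
      omega
    · -- gap ∈ {2,3} : need distance ≥ 3
      have hival : i.val = 1 := by
        rw [aFun_eq (by omega) i.isLt] at ha
        split_ifs at ha <;> omega
      have hj0 : j.val ≠ 0 := by
        intro h0
        have : rho n j.val = 0 := by simp [rho, h0]
        omega
      have hj1 : j.val ≠ 1 := by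
        intro h1
        have : rho n j.val = (n + 1) / 2 := by simp [rho, h1]
        omega
      have hnadj : ¬ (gearGraph n).Adj (some (Sum.inl i)) (some (Sum.inr j)) := by
        rw [adj_vw_iff]
        rintro (rfl | h)
        · exact hj1 hival
        · rcases Nat.lt_or_ge (j.val + 1) n with h2 | h2
          · rw [Nat.mod_eq_of_lt h2] at h; omega
          · have hj' : j.val + 1 = n := by omega
            rw [hj', Nat.mod_self] at h; omega
      have hd : 3 ≤ (gearGraph n).dist (some (Sum.inl i)) (some (Sum.inr j)) :=
        dist3 (by simp) hnadj (no_common_vw i j)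
      simp only [cLab] at habs ⊢
      push_cast at habs ⊢
      omega
  · -- gap ≥ 5
    simp only [cLab] at habs ⊢
    push_cast at habs ⊢
    have hd : 0 ≤ (gearGraph n).dist (some (Sum.inl i)) (some (Sum.inr j)) := Nat.zero_le _
    omega

lemma key_ww (hn : 7 ≤ n) {i j : Fin n} (hne : i ≠ j) :
    (5 : ℤ) ≤ (gearGraph n).dist (some (Sum.inr i)) (some (Sum.inr j)) +
      |(cLab n (some (Sum.inr i)) : ℤ) - cLab n (some (Sum.inr j))| := by
  by_cases hc : (i.val + 1) % n = j.val ∨ (j.val + 1) % n = i.val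
  · -- close: label gap ≥ 3, distance ≥ 2
    have hd : 2 ≤ (gearGraph n).dist (some (Sum.inr i)) (some (Sum.inr j)) :=
      dist2 (by simp [hne]) (not_adj_ww i j)
    have hgap : rho n j.val + 3 ≤ rho n i.val ∨ rho n i.val + 3 ≤ rho n j.val := by
      rcases hc with h | h
      · exact rho_gap hn i.isLt j.isLt h
      · rcases rho_gap hn j.isLt i.isLt h with h' | h'
        · exact Or.inr h'
        · exact Or.inl h'
    have habs : 3 ≤ |(cLab n (some (Sum.inr i)) : ℤ) - cLab n (some (Sum.inr j))| := by
      simp only [cLab]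
      rcases hgap with h | h
      · rw [abs_of_nonneg (by push_cast; omega)]; push_cast; omega
      · rw [abs_sub_comm, abs_of_nonneg (by push_cast; omega)]; push_cast; omega
    omega
  · -- far: distance ≥ 4, labels distinct
    have hd3 : 3 ≤ (gearGraph n).dist (some (Sum.inr i)) (some (Sum.inr j)) :=
      dist3 (by simp [hne]) (not_adj_ww i j) (no_common_ww hn hne hc)
    have heven := dist_ww_even (n := n) i j
    have hd : 4 ≤ (gearGraph n).dist (some (Sum.inr i)) (some (Sum.inr j)) := by omega
    have hinj : rho n i.val ≠ rho n j.val := fun h =>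
      hne (Fin.ext (rho_inj (by omega) i.isLt j.isLt h))
    have habs : 1 ≤ |(cLab n (some (Sum.inr i)) : ℤ) - cLab n (some (Sum.inr j))| := by
      apply Int.one_le_abs
      simp only [cLab]
      push_cast
      omega
    omega

lemma key (hn : 7 ≤ n) (u v : Option (Fin n ⊕ Fin n)) (hne : u ≠ v) :
    (5 : ℤ) ≤ (gearGraph n).dist u v + |(cLab n u : ℤ) - cLab n v| := by
  match u, v with
  | none, none => exact absurd rfl hne
  | none, some (Sum.inl i) => exact key_zv hn i
  | none, some (Sum.inr j) => exact key_zw hn j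
  | some (Sum.inl i), none =>
    rw [SimpleGraph.dist_comm, abs_sub_comm]; exact key_zv hn i
  | some (Sum.inr j), none =>
    rw [SimpleGraph.dist_comm, abs_sub_comm]; exact key_zw hn j
  | some (Sum.inl i), some (Sum.inl j) =>
    exact key_vv hn (by simpa using hne)
  | some (Sum.inl i), some (Sum.inr j) => exact key_vw hn i j
  | some (Sum.inr j), some (Sum.inl i) =>
    rw [SimpleGraph.dist_comm, abs_sub_comm]; exact key_vw hn i j
  | some (Sum.inr i), some (Sum.inr j) =>
    exact key_ww hn (by simpa using hne)

lemma cLab_inj (hn : 7 ≤ n) : Function.Injective (cLab n) := by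
  intro x y h
  have h1 : 1 ≤ n := by omega
  match x, y with
  | none, none => rfl
  | none, some (Sum.inl i) => simp only [cLab] at h; omega
  | none, some (Sum.inr j) =>
    simp only [cLab] at h
    omega
  | some (Sum.inl i), none => simp only [cLab] at h; omega
  | some (Sum.inr j), none => simp only [cLab] at h; omega
  | some (Sum.inl i), some (Sum.inl j) =>
    simp only [cLab] at h
    have := aFun_inj h1 i.isLt j.isLt (by omega)
    simp [Fin.ext this]
  | some (Sum.inl i), some (Sum.inr j) =>
    have := rho_lt h1 j.isLt
    simp only [cLab] at h
    omega
  | some (Sum.inr j), some (Sum.inl i) =>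
    have := rho_lt h1 j.isLt
    simp only [cLab] at h
    omega
  | some (Sum.inr i), some (Sum.inr j) =>
    simp only [cLab] at h
    have := rho_inj h1 i.isLt j.isLt (by omega)
    simp [Fin.ext this]

lemma sup_cLab (hn : 7 ≤ n) : Finset.univ.sup (cLab n) = 4 * n + 2 := by
  have h1 : 1 ≤ n := by omega
  apply le_antisymm
  · apply Finset.sup_le
    intro x _
    match x with
    | none => show 1 ≤ 4 * n + 2; omega
    | some (Sum.inl i) =>
      have := aFun_lt h1 i.val
      simp only [cLab]; omega
    | some (Sum.inr j) =>
      have := rho_lt h1 j.isLt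
      simp only [cLab]; omega
  · have h0 : cLab n (some (Sum.inl (⟨0, by omega⟩ : Fin n))) = 4 * n + 2 := by
      simp only [cLab]
      rw [aFun_eq h1 (by omega)]
      simp; omega
    rw [← h0]
    exact Finset.le_sup (Finset.mem_univ _)

end GearAux

/-- For `n ≥ 7`, the radio number of the gear graph `G_n` is at most `4n + 2`. -/
theorem radioNumber_gear_upper (n : ℕ) (hn : 7 ≤ n) :
    radioNumber (gearGraph n) ≤ 4 * n + 2 := by
  apply Nat.sInf_le
  refine ⟨GearAux.cLab n, ⟨GearAux.cLab_inj hn, ?_, ?_⟩, (GearAux.sup_cLab hn).symm⟩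
  · intro x
    match x with
    | none => exact le_refl 1
    | some (Sum.inl i) => show 1 ≤ n + 5 + 3 * _; omega
    | some (Sum.inr j) => show 1 ≤ 4 + _; omega
  · intro u v hne
    have h5 := GearAux.key hn u v hne
    have hdiam : (gearGraph n).diam ≤ 4 := GearAux.diam_le4
    have : ((gearGraph n).diam : ℤ) + 1 ≤ 5 := by
      have : ((gearGraph n).diam : ℤ) ≤ 4 := by exact_mod_cast hdiam
      omega
    omega
end

section
/- The radio number of the gear graph G_4 equals 18, i.e., rn(G_4) = 4·4 + 2 = 18. -/
/-! ### Auxiliary material -/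

abbrev V9 := Option (Fin 4 ⊕ Fin 4)

/-- Explicit distance function on the gear graph `G₄`. -/
def D : V9 → V9 → ℕ
  | none, none => 0
  | none, some (.inl _) => 1
  | none, some (.inr _) => 2
  | some (.inl _), none => 1
  | some (.inr _), none => 2
  | some (.inl i), some (.inl j) => if i = j then 0 else 2
  | some (.inl i), some (.inr j) => if i = j ∨ (j.val + 1) % 4 = i.val then 1 else 3
  | some (.inr i), some (.inl j) => if j = i ∨ (i.val + 1) % 4 = j.val then 1 else 3
  | some (.inr i), some (.inr j) => if i = j then 0 else if (i.val + 2) % 4 = j.val then 4 else 2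

instance : DecidableRel (gearGraph 4).Adj := fun a b =>
  decidable_of_iff' _ (SimpleGraph.fromRel_adj _ a b)

lemma D_self : ∀ u : V9, D u u = 0 := by decide
lemma D_le4 : ∀ u v : V9, D u v ≤ 4 := by decide
lemma D_eq_zero : ∀ u v : V9, D u v = 0 → u = v := by decide
lemma D_lip : ∀ a b c : V9, (gearGraph 4).Adj a b → D a c ≤ D b c + 1 := by decide
lemma D_desc : ∀ u v : V9, u ≠ v → ∃ w, (gearGraph 4).Adj u w ∧ D w v + 1 ≤ D u v := by decide

lemma exists_walk_le : ∀ (n : ℕ) (u v : V9), D u v ≤ n →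
    ∃ p : (gearGraph 4).Walk u v, p.length ≤ D u v := by
  intro n
  induction n with
  | zero =>
    intro u v h
    have : u = v := D_eq_zero u v (Nat.le_zero.mp h)
    subst this
    exact ⟨SimpleGraph.Walk.nil, by simp [D_self]⟩
  | succ n ih =>
    intro u v h
    by_cases hu : u = v
    · subst hu; exact ⟨SimpleGraph.Walk.nil, by simp⟩
    · obtain ⟨w, hadj, hw⟩ := D_desc u v hu
      obtain ⟨q, hq⟩ := ih w v (by omega)
      exact ⟨SimpleGraph.Walk.cons hadj q, by simpa using by omega⟩

lemma D_le_length : ∀ (v u : V9) (p : (gearGraph 4).Walk u v), D u v ≤ p.length := by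
  intro v u p
  induction p with
  | nil => simp [D_self]
  | cons h q ih =>
    rw [SimpleGraph.Walk.length_cons]
    calc D _ _ ≤ D _ _ + 1 := D_lip _ _ _ h
    _ ≤ _ := by omega

lemma reach : ∀ u v : V9, (gearGraph 4).Reachable u v := by
  intro u v
  obtain ⟨p, _⟩ := exists_walk_le (D u v) u v le_rfl
  exact ⟨p⟩

lemma dist_eq : ∀ u v : V9, (gearGraph 4).dist u v = D u v := by
  intro u v
  apply le_antisymm
  · obtain ⟨p, hp⟩ := exists_walk_le (D u v) u v le_rfl
    exact le_trans (SimpleGraph.dist_le p) hp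
  · obtain ⟨p, hp⟩ := (reach u v).exists_walk_length_eq_dist
    exact hp ▸ D_le_length v u p

lemma gear_edist_ne_top : ∀ u v : V9, (gearGraph 4).edist u v ≠ ⊤ := fun u v =>
  (SimpleGraph.edist_ne_top_iff_reachable).mpr (reach u v)

lemma diam_eq : (gearGraph 4).diam = 4 := by
  have hed : ∀ u v : V9, (gearGraph 4).edist u v = (D u v : ℕ∞) := by
    intro u v
    have h2 : ((gearGraph 4).edist u v).toNat = D u v := dist_eq u v
    rw [← h2, ENat.coe_toNat (gear_edist_ne_top u v)]
  have h1 : (gearGraph 4).ediam = 4 := by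
    apply le_antisymm
    · apply SimpleGraph.ediam_le_of_edist_le
      intro u v
      rw [hed]
      exact_mod_cast Nat.cast_le.mpr (D_le4 u v)
    · calc (4 : ℕ∞) = (gearGraph 4).edist (some (Sum.inr 0)) (some (Sum.inr 2)) := by
            rw [hed]; rfl
        _ ≤ _ := SimpleGraph.edist_le_ediam
  rw [SimpleGraph.diam, h1]
  rfl

/-! ### The optimal labeling -/

def c0 : V9 → ℕ
  | none => 1
  | some (.inl i) => [14, 10, 6, 18].get i
  | some (.inr i) => [4, 16, 12, 8].get i

lemma c0_radio : IsRadioLabeling (gearGraph 4) c0 := by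
  refine ⟨by decide, by decide, ?_⟩
  intro u v huv
  rw [diam_eq, dist_eq]
  have : ∀ u v : V9, u ≠ v → (4 : ℤ) + 1 ≤ (D u v : ℤ) + |(c0 u : ℤ) - (c0 v : ℤ)| := by decide
  exact this u v huv

lemma c0_sup : Finset.univ.sup c0 = 18 := by decide

/-! ### The lower bound: a verified pruned search over orderings -/

def DN (a b : ℕ) : ℕ :=
  if a = b then 0
  else if a = 0 then (if b ≤ 4 then 1 else 2)
  else if b = 0 then (if a ≤ 4 then 1 else 2)
  else if a ≤ 4 then
    (if b ≤ 4 then 2 else (if a - 1 = b - 5 ∨ a - 1 = (b - 4) % 4 then 1 else 3))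
  else if b ≤ 4 then (if b - 1 = a - 5 ∨ b - 1 = (a - 4) % 4 then 1 else 3)
  else if a - b = 2 ∨ b - a = 2 then 4 else 2

def wtN (a b : ℕ) : ℕ := if 9 ≤ a ∨ 9 ≤ b then 2 else 5 - DN a b

lemma wtN_pos (a b : ℕ) : 1 ≤ wtN a b := by
  unfold wtN DN; split_ifs <;> omega

lemma wtN_cases (a b : ℕ) :
    2 ≤ wtN a b ∨ (a = 5 ∧ b = 7) ∨ (a = 7 ∧ b = 5) ∨ (a = 6 ∧ b = 8) ∨ (a = 8 ∧ b = 6) := by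
  unfold wtN DN; split_ifs <;> omega

def availN (l : List ℕ) : ℕ :=
  (if 5 ∈ l ∧ 7 ∈ l then 1 else 0) + (if 6 ∈ l ∧ 8 ∈ l then 1 else 0)

lemma availN_le (l₁ l₂ : List ℕ) (h : ∀ a, a ∈ l₁ → a ∈ l₂) : availN l₁ ≤ availN l₂ := by
  have h5 := @h 5; have h7 := @h 7; have h6 := @h 6; have h8 := @h 8
  unfold availN; split_ifs <;> simp_all

lemma availN_le_two (l : List ℕ) : availN l ≤ 2 := by
  unfold availN; split_ifs <;> omega

lemma availN_drop (last x : ℕ) (xs : List ℕ) (hnd : last ∉ x :: xs)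
    (hp : (last = 5 ∧ x = 7) ∨ (last = 7 ∧ x = 5) ∨ (last = 6 ∧ x = 8) ∨ (last = 8 ∧ x = 6)) :
    availN (x :: xs) + 1 ≤ availN (last :: x :: xs) := by
  simp only [List.mem_cons, not_or] at hnd
  rcases hp with ⟨h1, h2⟩ | ⟨h1, h2⟩ | ⟨h1, h2⟩ | ⟨h1, h2⟩ <;> subst h1 <;> subst h2 <;>
    · unfold availN
      simp only [List.mem_cons]
      split_ifs <;> simp_all

def pathWtN : ℕ → List ℕ → ℕ
  | _, [] => 0
  | last, x :: xs => wtN last x + pathWtN x xs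

lemma len_le_pathWtN (l : List ℕ) (last : ℕ) : l.length ≤ pathWtN last l := by
  induction l generalizing last with
  | nil => simp [pathWtN]
  | cons x xs ih =>
    have := wtN_pos last x
    have := ih x
    simp only [pathWtN, List.length_cons]; omega

lemma pathWtN_lb (l : List ℕ) (last : ℕ) (h : (last :: l).Nodup) :
    2 * l.length ≤ pathWtN last l + availN (last :: l) := by
  induction l generalizing last with
  | nil => simp
  | cons x xs ih =>
    have hnd : last ∉ x :: xs := (List.nodup_cons.mp h).1
    have ih' := ih x (List.nodup_cons.mp h).2
    have hmono : availN (x :: xs) ≤ availN (last :: x :: xs) :=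
      availN_le _ _ (fun a ha => List.mem_cons_of_mem _ ha)
    rcases wtN_cases last x with h2 | hp
    · simp only [pathWtN, List.length_cons]; omega
    · have hdrop := availN_drop last x xs hnd hp
      have := wtN_pos last x
      simp only [pathWtN, List.length_cons]; omega

/-- Pruned search: `okN fuel rem last b = true` certifies that every ordering of
`rem`, walked starting from `last`, has total weight at least `b`. -/
def okN : ℕ → List ℕ → ℕ → ℕ → Bool
  | _, [], _, b => b == 0
  | 0, rem, _, b => decide (b ≤ rem.length)
  | fuel+1, rem@(_::_), last, b =>
      decide (b ≤ 2 * rem.length - availN (last :: rem)) ||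
        rem.all (fun x => okN fuel (rem.erase x) x (b - wtN last x))

lemma okN_spec : ∀ (fuel : ℕ) (rem : List ℕ) (last b : ℕ), rem.Nodup → last ∉ rem →
    okN fuel rem last b = true → ∀ l, l.Perm rem → b ≤ pathWtN last l := by
  intro fuel
  induction fuel with
  | zero =>
    intro rem last b _ _ hok l hl
    match rem, hl with
    | [], hl =>
      have : l = [] := hl.eq_nil
      subst this
      simp only [okN, beq_iff_eq] at hok
      simp [pathWtN, hok]
    | r :: rs, hl =>
      simp only [okN, decide_eq_true_eq] at hok
      calc b ≤ (r :: rs).length := hok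
        _ = l.length := hl.length_eq.symm
        _ ≤ _ := len_le_pathWtN l last
  | succ fuel ih =>
    intro rem last b hnd hlast hok l hl
    match rem, hl with
    | [], hl =>
      have : l = [] := hl.eq_nil
      subst this
      simp only [okN, beq_iff_eq] at hok
      simp [pathWtN, hok]
    | r :: rs, hl =>
      simp only [okN, Bool.or_eq_true, decide_eq_true_eq, List.all_eq_true] at hok
      rcases hok with hok | hok
      · -- prune branch
        have hnodl : (last :: l).Nodup := by
          refine List.nodup_cons.mpr ⟨fun hm => hlast (hl.mem_iff.mp hm), hl.nodup_iff.mpr hnd⟩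
        have hlb := pathWtN_lb l last hnodl
        have hav1 : availN (last :: l) ≤ availN (last :: (r :: rs)) :=
          availN_le _ _ (List.cons_subset_cons last hl.subset)
        have hav2' : availN (last :: (r :: rs)) ≤ availN (last :: l) :=
          availN_le _ _ (List.cons_subset_cons last hl.symm.subset)
        have hlen : l.length = (r :: rs).length := hl.length_eq
        have hav2 := availN_le_two (last :: (r :: rs))
        omega
      · -- recursive branch
        match l, hl with
        | [], hl => exact absurd hl.symm.eq_nil (by simp)
        | y :: ys, hl =>
          have hy : y ∈ r :: rs := hl.mem_iff.mp List.mem_cons_self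
          have hok' := hok y hy
          have hperm : ys.Perm ((r :: rs).erase y) :=
            (List.perm_cons y).mp (hl.trans (List.perm_cons_erase hy))
          have hys := ih ((r :: rs).erase y) y (b - wtN last y)
            (hnd.erase y) (hnd.not_mem_erase) hok' ys hperm
          have := wtN_pos last y
          simp only [pathWtN]
          omega

def allN : List ℕ := [0, 1, 2, 3, 4, 5, 6, 7, 8]

set_option maxRecDepth 100000 in
set_option maxHeartbeats 8000000 in
lemma okN_univ : ∀ x ∈ allN, okN 8 (allN.erase x) x 17 = true := by decide

lemma allN_nodup : allN.Nodup := by decide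

/-! ### Bridging the search to the graph -/

def code : V9 → ℕ
  | none => 0
  | some (.inl i) => 1 + i.val
  | some (.inr i) => 5 + i.val

def allV : List V9 :=
  [none, some (.inl 0), some (.inl 1), some (.inl 2), some (.inl 3),
   some (.inr 0), some (.inr 1), some (.inr 2), some (.inr 3)]

lemma allV_nodup : allV.Nodup := by decide

lemma allV_mem : ∀ x : V9, x ∈ allV := by
  intro x
  rcases x with _ | i | i
  · simp [allV]
  · fin_cases i <;> simp [allV]
  · fin_cases i <;> simp [allV]

lemma allV_map_code : allV.map code = allN := by decide

lemma code_mem : ∀ x : V9, code x ∈ allN := by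
  intro x
  rw [← allV_map_code]
  exact List.mem_map_of_mem (allV_mem x)

lemma wt_code : ∀ a b : V9, wtN (code a) (code b) + D a b = 5 := by decide

lemma climb (c : V9 → ℕ) : ∀ (l : List V9) (x : V9),
    List.Chain' (fun a b => c a + wtN (code a) (code b) ≤ c b) (x :: l) →
    ∃ y ∈ x :: l, c x + pathWtN (code x) (l.map code) ≤ c y := by
  intro l
  induction l with
  | nil => intro x _; exact ⟨x, by simp, by simp [pathWtN]⟩
  | cons z l' ih =>
    intro x hch
    simp only [List.Chain', List.isChain_cons_cons] at hch
    obtain ⟨y, hy, hyle⟩ := ih z hch.2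
    refine ⟨y, List.mem_cons_of_mem _ hy, ?_⟩
    have h1 := hch.1
    simp only [List.map_cons, pathWtN]
    omega

lemma lower_bound (c : V9 → ℕ) (hc : IsRadioLabeling (gearGraph 4) c) :
    18 ≤ Finset.univ.sup c := by
  obtain ⟨hinj, hpos, hrad⟩ := hc
  have hgap : ∀ a b : V9, c a < c b → c a + wtN (code a) (code b) ≤ c b := by
    intro a b hab
    have hne : a ≠ b := fun h => by simp [h] at hab
    have h5 := hrad a b hne
    rw [diam_eq, dist_eq] at h5
    have habs : |(c a : ℤ) - c b| = (c b : ℤ) - c a := by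
      rw [abs_of_nonpos (sub_nonpos.mpr (by exact_mod_cast hab.le))]; ring
    rw [habs] at h5
    have hw := wt_code a b
    omega
  letI : LinearOrder V9 := LinearOrder.lift' c hinj
  letI : LE V9 := this.toLE
  set L := Finset.sort (Finset.univ : Finset V9) (· ≤ ·) with hLdef
  have hsorted : L.Pairwise (· ≤ ·) := Finset.pairwise_sort _ _
  have hnd : L.Nodup := Finset.sort_nodup _ _
  have hmem : ∀ x : V9, x ∈ L := fun x => (Finset.mem_sort _).mpr (Finset.mem_univ x)
  have hchain : L.Chain' (fun a b => c a + wtN (code a) (code b) ≤ c b) := by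
    have hp : L.Pairwise (fun a b => c a + wtN (code a) (code b) ≤ c b) := by
      refine (hsorted.and hnd).imp ?_
      rintro a b ⟨hle, hne⟩
      refine hgap a b (lt_of_le_of_ne hle (fun h => hne (hinj h)))
    exact hp.isChain
  obtain ⟨x, l, hxl⟩ : ∃ x l, L = x :: l := by
    cases hLl : L with
    | nil => exact absurd (hmem none) (by simp [hLl])
    | cons a as => exact ⟨a, as, rfl⟩
  have hLperm : L.Perm allV :=
    (List.perm_ext_iff_of_nodup hnd allV_nodup).mpr (fun a => by simp [hmem a, allV_mem a])
  have hmap : (code x :: l.map code).Perm allN := by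
    rw [← allV_map_code, ← List.map_cons, ← hxl]
    exact hLperm.map code
  have hl' : (l.map code).Perm (allN.erase (code x)) :=
    (List.perm_cons (code x)).mp (hmap.trans (List.perm_cons_erase (code_mem x)))
  have h17 : 17 ≤ pathWtN (code x) (l.map code) :=
    okN_spec 8 (allN.erase (code x)) (code x) 17 (allN_nodup.erase _)
      (allN_nodup.not_mem_erase) (okN_univ (code x) (code_mem x)) _ hl'
  obtain ⟨y, _, hxy⟩ := climb c l x (hxl ▸ hchain)
  have h1 : 1 ≤ c x := hpos x
  have hy' : c y ≤ Finset.univ.sup c := Finset.le_sup (Finset.mem_univ y)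
  omega

/-- The radio number of the gear graph `G_4` is `18`. -/
theorem radioNumber_gear_4 : radioNumber (gearGraph 4) = 18 := by
  have h18 : 18 ∈ {s : ℕ | ∃ c : V9 → ℕ, IsRadioLabeling (gearGraph 4) c ∧
      s = Finset.univ.sup c} := ⟨c0, c0_radio, c0_sup.symm⟩
  refine le_antisymm (Nat.sInf_le h18) (le_csInf ⟨18, h18⟩ ?_)
  rintro s ⟨c, hc, rfl⟩
  exact lower_bound c hc
end

section
/- The radio number of the gear graph G_5 equals 22, i.e., rn(G_5) = 4·5 + 2 = 22. -/
/-! ### Auxiliary definitions for the gear graph `G₅` -/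

abbrev GV : Type := Option (Fin 5 ⊕ Fin 5)

instance gearAdjDec : DecidableRel (gearGraph 5).Adj := fun u v =>
  decidable_of_iff _ (SimpleGraph.fromRel_adj _ u v).symm

/-- The optimal radio labeling of `G₅`. -/
def gLab : GV → ℕ
  | none => 1
  | some (Sum.inl j) => [10, 18, 6, 14, 22].getD j.val 0
  | some (Sum.inr j) => [4, 12, 20, 8, 16].getD j.val 0

/-- Distances from `w i` in `G₅`. -/
def phiW (i : Fin 5) : GV → ℕ
  | none => 2
  | some (Sum.inl j) => [1, 1, 3, 3, 3].getD ((j.val + 5 - i.val) % 5) 0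
  | some (Sum.inr j) => [0, 2, 4, 4, 2].getD ((j.val + 5 - i.val) % 5) 0

/-- Distances from `v i` in `G₅`. -/
def phiV (i : Fin 5) : GV → ℕ
  | none => 1
  | some (Sum.inl j) => if j = i then 0 else 2
  | some (Sum.inr j) => [1, 3, 3, 3, 1].getD ((j.val + 5 - i.val) % 5) 0

/-- A lower bound matrix for distances in `G₅` (in fact the exact distances). -/
def gD : GV → GV → ℕ
  | some (Sum.inr i), x => phiW i x
  | some (Sum.inl i), some (Sum.inr j) => phiW j (some (Sum.inl i))
  | some (Sum.inl i), x => phiV i x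
  | none, some (Sum.inr j) => phiW j none
  | none, some (Sum.inl j) => phiV j none
  | none, none => 0

/-- The weight: 0 at the center, 1 at the `v`'s, 2 at the `w`'s. -/
def gW : GV → ℕ
  | none => 0
  | some (Sum.inl _) => 1
  | some (Sum.inr _) => 2

lemma gear5_adj_hub : ∀ i : Fin 5, (gearGraph 5).Adj none (some (Sum.inl i)) := by decide

lemma gear5_adj_vw : ∀ i : Fin 5,
    (gearGraph 5).Adj (some (Sum.inl i)) (some (Sum.inr i)) := by decide

lemma gear5_connected : (gearGraph 5).Connected := by
  rw [SimpleGraph.connected_iff]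
  refine ⟨fun u v => ?_, ⟨none⟩⟩
  have key : ∀ x : GV, (gearGraph 5).Reachable none x := by
    intro x
    match x with
    | none => rfl
    | some (Sum.inl i) => exact (gear5_adj_hub i).reachable
    | some (Sum.inr i) => exact (gear5_adj_hub i).reachable.trans (gear5_adj_vw i).reachable
  exact (key u).symm.trans (key v)

lemma walk_bound (φ : GV → ℕ)
    (hφ : ∀ a b : GV, (gearGraph 5).Adj a b → φ b ≤ φ a + 1) :
    ∀ {u v : GV} (p : (gearGraph 5).Walk u v), φ v ≤ φ u + p.length := by
  intro u v p
  induction p with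
  | nil => simp
  | @cons a b c h p ih =>
      have h1 := hφ a b h
      simp only [SimpleGraph.Walk.length_cons]
      omega

lemma dist_ge (φ : GV → ℕ)
    (hφ : ∀ a b : GV, (gearGraph 5).Adj a b → φ b ≤ φ a + 1)
    (u v : GV) (h0 : φ u = 0) : φ v ≤ (gearGraph 5).dist u v := by
  obtain ⟨p, hp⟩ := gear5_connected.exists_walk_length_eq_dist u v
  have := walk_bound φ hφ p
  rw [hp, h0] at this
  simpa using this

lemma phiW_lip : ∀ (i : Fin 5) (a b : GV), (gearGraph 5).Adj a b →
    phiW i b ≤ phiW i a + 1 := by decide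

lemma phiV_lip : ∀ (i : Fin 5) (a b : GV), (gearGraph 5).Adj a b →
    phiV i b ≤ phiV i a + 1 := by decide

lemma phiW_self (i : Fin 5) : phiW i (some (Sum.inr i)) = 0 := by
  show [0, 2, 4, 4, 2].getD ((i.val + 5 - i.val) % 5) 0 = 0
  have : (i.val + 5 - i.val) % 5 = 0 := by omega
  rw [this]; rfl

lemma phiV_self (i : Fin 5) : phiV i (some (Sum.inl i)) = 0 := by
  show (if i = i then 0 else 2) = 0
  simp

lemma gD_le_dist : ∀ u v : GV, gD u v ≤ (gearGraph 5).dist u v := by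
  intro u v
  match u, v with
  | some (Sum.inr i), x =>
      exact dist_ge (phiW i) (phiW_lip i) _ x (phiW_self i)
  | some (Sum.inl i), some (Sum.inr j) =>
      show phiW j (some (Sum.inl i)) ≤ _
      rw [SimpleGraph.dist_comm]
      exact dist_ge (phiW j) (phiW_lip j) _ _ (phiW_self j)
  | some (Sum.inl i), some (Sum.inl j) =>
      show phiV i (some (Sum.inl j)) ≤ _
      exact dist_ge (phiV i) (phiV_lip i) _ _ (phiV_self i)
  | some (Sum.inl i), none =>
      show phiV i none ≤ _
      exact dist_ge (phiV i) (phiV_lip i) _ _ (phiV_self i)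
  | none, some (Sum.inr j) =>
      show phiW j none ≤ _
      rw [SimpleGraph.dist_comm]
      exact dist_ge (phiW j) (phiW_lip j) _ _ (phiW_self j)
  | none, some (Sum.inl j) =>
      show phiV j none ≤ _
      rw [SimpleGraph.dist_comm]
      exact dist_ge (phiV j) (phiV_lip j) _ _ (phiV_self j)
  | none, none => exact Nat.zero_le _

lemma dist_hub_le : ∀ u : GV, (gearGraph 5).dist none u ≤ gW u := by
  intro u
  match u with
  | none => simp [gW]
  | some (Sum.inl i) =>
      exact SimpleGraph.dist_le ((gear5_adj_hub i).toWalk)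
  | some (Sum.inr i) =>
      exact SimpleGraph.dist_le
        (SimpleGraph.Walk.cons (gear5_adj_hub i) (gear5_adj_vw i).toWalk)

lemma dist_le_weights (u v : GV) : (gearGraph 5).dist u v ≤ gW u + gW v := by
  calc (gearGraph 5).dist u v
      ≤ (gearGraph 5).dist u none + (gearGraph 5).dist none v :=
        gear5_connected.dist_triangle
    _ ≤ gW u + gW v := by
        rw [SimpleGraph.dist_comm (v := none)]
        exact Nat.add_le_add (dist_hub_le u) (dist_hub_le v)

lemma gW_le_two (u : GV) : gW u ≤ 2 := by
  match u with
  | none => exact Nat.zero_le _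
  | some (Sum.inl _) => exact one_le_two
  | some (Sum.inr _) => exact le_refl _

lemma gear5_ediam_ne_top : (gearGraph 5).ediam ≠ ⊤ := by
  obtain ⟨u, v, h⟩ := SimpleGraph.exists_edist_eq_ediam_of_finite (G := gearGraph 5)
  rw [← h]
  exact SimpleGraph.edist_ne_top_iff_reachable.mpr (gear5_connected.preconnected u v)

lemma gear5_diam : (gearGraph 5).diam = 4 := by
  refine le_antisymm ?_ ?_
  · obtain ⟨u, v, h⟩ := SimpleGraph.exists_dist_eq_diam (G := gearGraph 5)
    rw [← h]
    calc (gearGraph 5).dist u v ≤ gW u + gW v := dist_le_weights u v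
      _ ≤ 4 := by have := gW_le_two u; have := gW_le_two v; omega
  · have h1 : gD (some (Sum.inr 0)) (some (Sum.inr 2)) = 4 := by decide
    have h2 := gD_le_dist (some (Sum.inr 0)) (some (Sum.inr 2))
    have h3 := SimpleGraph.dist_le_diam gear5_ediam_ne_top
      (u := (some (Sum.inr 0) : GV)) (v := some (Sum.inr 2))
    omega

lemma gLab_radio : IsRadioLabeling (gearGraph 5) gLab := by
  refine ⟨by decide, by decide, ?_⟩
  intro u v huv
  rw [gear5_diam]
  have hkey : ∀ u v : GV, u ≠ v →
      (5 : ℤ) ≤ (gD u v : ℤ) + |(gLab u : ℤ) - (gLab v : ℤ)| := by decide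
  have h1 := hkey u v huv
  have h2 := gD_le_dist u v
  have h2' : (gD u v : ℤ) ≤ ((gearGraph 5).dist u v : ℤ) := by exact_mod_cast h2
  push_cast
  linarith

lemma gLab_sup : (22 : ℕ) = Finset.univ.sup gLab := by decide

/-! ### Lower bound -/

lemma sum_gW : ∑ v : GV, (gW v : ℤ) = 15 := by decide

lemma gear5_exists_sorted (c : GV → ℕ) (hinj : Function.Injective c) :
    ∃ σ : Fin 11 → GV, Function.Bijective σ ∧
      ∀ i j : Fin 11, i < j → c (σ i) < c (σ j) := by
  have htcard : (Finset.univ.image c).card = 11 := by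
    rw [Finset.card_image_of_injective _ hinj]
    rfl
  set e := (Finset.univ.image c).orderIsoOfFin htcard with he
  refine ⟨fun i => Function.invFun c ((e i : ℕ)), ?_, ?_⟩
  all_goals
    have hcσ : ∀ i : Fin 11, c (Function.invFun c ((e i : ℕ))) = (e i : ℕ) := by
      intro i
      obtain ⟨x, _, hx⟩ := Finset.mem_image.mp (e i).2
      exact Function.invFun_eq ⟨x, hx⟩
  · refine (Fintype.bijective_iff_injective_and_card _).mpr ⟨?_, rfl⟩
    intro i j h
    apply e.injective
    apply Subtype.ext
    rw [← hcσ i, ← hcσ j]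
    exact congrArg c h
  · intro i j hij
    rw [hcσ i, hcσ j]
    exact_mod_cast e.strictMono hij

lemma gear5_lower (c : GV → ℕ) (hc : IsRadioLabeling (gearGraph 5) c) :
    22 ≤ Finset.univ.sup c := by
  obtain ⟨hinj, hpos, hrad⟩ := hc
  obtain ⟨σ, hσbij, hmono⟩ := gear5_exists_sorted c hinj
  have hσinj := hσbij.injective
  -- the ℕ-indexed versions
  set σf : ℕ → GV := fun k => σ ⟨min k 10, by omega⟩ with hσf
  have hσfeq : ∀ (k : ℕ) (h : k < 11), σf k = σ ⟨k, h⟩ := by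
    intro k h
    simp only [hσf]
    congr 1
    exact Fin.ext (by simp; omega)
  set F : ℕ → ℤ := fun k => (c (σf k) : ℤ) with hF
  -- key gap estimate
  have hkey : ∀ i : ℕ, i < 10 →
      (5 : ℤ) - ((gW (σf i) : ℤ) + (gW (σf (i+1)) : ℤ)) ≤ F (i+1) - F i := by
    intro i hi
    have h1 : i < 11 := by omega
    have h2 : i + 1 < 11 := by omega
    have hlt : c (σf i) < c (σf (i+1)) := by
      rw [hσfeq i h1, hσfeq (i+1) h2]
      exact hmono _ _ (by simp [Fin.lt_def])
    have hne : σf i ≠ σf (i+1) := fun h => by rw [h] at hlt; omega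
    have hr := hrad _ _ hne
    rw [gear5_diam] at hr
    have habs : |(c (σf i) : ℤ) - (c (σf (i+1)) : ℤ)| = F (i+1) - F i := by
      rw [abs_sub_comm, abs_of_nonneg (by omega)]
    rw [habs] at hr
    push_cast at hr
    have hd := dist_le_weights (σf i) (σf (i+1))
    have hd' : ((gearGraph 5).dist (σf i) (σf (i+1)) : ℤ)
        ≤ (gW (σf i) : ℤ) + (gW (σf (i+1)) : ℤ) := by exact_mod_cast hd
    linarith
  -- telescoping
  have tele : ∑ i ∈ Finset.range 10, (F (i+1) - F i) = F 10 - F 0 :=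
    Finset.sum_range_sub F 10
  have hsum : ∑ i ∈ Finset.range 10,
      ((5 : ℤ) - ((gW (σf i) : ℤ) + (gW (σf (i+1)) : ℤ))) ≤ F 10 - F 0 := by
    rw [← tele]
    exact Finset.sum_le_sum fun i hi => hkey i (Finset.mem_range.mp hi)
  set S : ℤ := ∑ i ∈ Finset.range 11, (gW (σf i) : ℤ) with hS
  have hS15 : S = 15 := by
    rw [hS]
    have : ∑ i ∈ Finset.range 11, (gW (σf i) : ℤ) = ∑ i : Fin 11, (gW (σf i) : ℤ) :=
      (Fin.sum_univ_eq_sum_range (fun i => (gW (σf i) : ℤ)) 11).symm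
    rw [this]
    have heq : ∀ i : Fin 11, (gW (σf i.val) : ℤ) = (gW (σ i) : ℤ) := by
      intro i
      rw [hσfeq i.val i.isLt]
    calc ∑ i : Fin 11, (gW (σf i.val) : ℤ)
        = ∑ i : Fin 11, (gW (σ i) : ℤ) := Finset.sum_congr rfl fun i _ => heq i
      _ = ∑ v : GV, (gW v : ℤ) :=
          Fintype.sum_bijective σ hσbij _ _ (fun i => rfl)
      _ = 15 := sum_gW
  have hps : ∑ i ∈ Finset.range 11, (gW (σf i) : ℤ)
      = (∑ i ∈ Finset.range 10, (gW (σf i) : ℤ)) + (gW (σf 10) : ℤ) :=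
    Finset.sum_range_succ (fun i => (gW (σf i) : ℤ)) 10
  have hps' : ∑ i ∈ Finset.range 11, (gW (σf i) : ℤ)
      = (∑ i ∈ Finset.range 10, (gW (σf (i+1)) : ℤ)) + (gW (σf 0) : ℤ) :=
    Finset.sum_range_succ' (fun i => (gW (σf i) : ℤ)) 10
  have h10 : ∑ i ∈ Finset.range 10, (gW (σf i) : ℤ) = S - (gW (σf 10) : ℤ) := by
    rw [hS]; linarith
  have h10' : ∑ i ∈ Finset.range 10, (gW (σf (i+1)) : ℤ) = S - (gW (σf 0) : ℤ) := by
    rw [hS]; linarith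
  have hsplit : ∑ i ∈ Finset.range 10,
      ((5 : ℤ) - ((gW (σf i) : ℤ) + (gW (σf (i+1)) : ℤ)))
      = 50 - (S - (gW (σf 10) : ℤ)) - (S - (gW (σf 0) : ℤ)) := by
    rw [Finset.sum_sub_distrib, Finset.sum_add_distrib, h10, h10']
    simp
    ring
  -- the two extreme vertices are not both the center
  have hends : (1 : ℤ) ≤ (gW (σf 0) : ℤ) + (gW (σf 10) : ℤ) := by
    have hne : σf 0 ≠ σf 10 := by
      rw [hσfeq 0 (by omega), hσfeq 10 (by omega)]
      intro h
      have := hσinj h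
      simp at this
    have hginz : ∀ x : GV, x ≠ none → 1 ≤ gW x := by
      intro x hx
      match x with
      | none => exact absurd rfl hx
      | some (Sum.inl _) => exact le_refl _
      | some (Sum.inr _) => exact one_le_two
    by_cases h0 : σf 0 = none
    · have h10n : σf 10 ≠ none := fun h => hne (h0.trans h.symm)
      have := hginz _ h10n
      have : (1 : ℤ) ≤ (gW (σf 10) : ℤ) := by exact_mod_cast this
      have hnn : (0 : ℤ) ≤ (gW (σf 0) : ℤ) := by positivity
      linarith
    · have := hginz _ h0
      have : (1 : ℤ) ≤ (gW (σf 0) : ℤ) := by exact_mod_cast this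
      have hnn : (0 : ℤ) ≤ (gW (σf 10) : ℤ) := by positivity
      linarith
  -- conclude
  have hF0 : (1 : ℤ) ≤ F 0 := by
    simp only [hF]
    exact_mod_cast hpos (σf 0)
  have hF10 : F 10 ≤ ((Finset.univ.sup c : ℕ) : ℤ) := by
    have h := Finset.le_sup (f := c) (Finset.mem_univ (σf 10))
    simp only [hF]
    exact_mod_cast h
  rw [hsplit, hS15] at hsum
  have : (22 : ℤ) ≤ ((Finset.univ.sup c : ℕ) : ℤ) := by linarith
  exact_mod_cast this

/-- The radio number of the gear graph `G_5` is `22`. -/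
theorem radioNumber_gear_5 : radioNumber (gearGraph 5) = 22 := by
  have hmem : (22 : ℕ) ∈ {s : ℕ | ∃ c : GV → ℕ,
      IsRadioLabeling (gearGraph 5) c ∧ s = Finset.univ.sup c} :=
    ⟨gLab, gLab_radio, gLab_sup⟩
  refine le_antisymm (Nat.sInf_le hmem) ?_
  refine le_csInf ⟨22, hmem⟩ ?_
  rintro s ⟨c, hc, rfl⟩
  exact gear5_lower c hc
end
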